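/- Let a superport network with m > p have response matrix L, and let C be the response matrix of the electrical network obtained by unifying all the superports. Let C̃ be the matrix obtained from C by removing the last row and the last column; then C̃ is invertible. Let F := C̃^{−1} (rows and columns indexed by the boundary vertices 1,…,m−1); let G be obtained from F by subtracting, for each non-root boundary vertex k with root(k) ≠ m, the column root(k) from the column k; let H be obtained from G by subtracting, for each non-root boundary vertex k with root(k) ≠ m, the row root(k) from the row k; and let H' be obtained from H by deleting the row k and the column k for every root k ≠ m. Then H' is invertible and L = H'^{−1}. -/

import Mathlib

open Finset BigOperators
open scoped Classical

namespace Superport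

/-- A superport network: a finite connected simple graph on `Fin n` with conductances `c`
and `p` nonempty pairwise disjoint superports `A 0, …, A (p-1)` occupying the initial
segment of the vertices, ordered consecutively. -/
structure Network where
  n : ℕ
  p : ℕ
  graph : SimpleGraph (Fin n)
  c : Fin n → Fin n → ℝ
  A : Fin p → Finset (Fin n)
  p_pos : 0 < p
  connected : graph.Connected
  c_symm : ∀ k l, c k l = c l k
  c_pos : ∀ k l, graph.Adj k l → 0 < c k l
  c_zero : ∀ k l, ¬ graph.Adj k l → c k l = 0
  A_nonempty : ∀ i, (A i).Nonempty
  A_disjoint : ∀ i j, i ≠ j → Disjoint (A i) (A j)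
  A_ordered : ∀ i j u v, i < j → u ∈ A i → v ∈ A j → u < v
  boundary_initial : ∀ v : Fin n, (∃ i, v ∈ A i) ↔ (v : ℕ) < ∑ i, (A i).card

namespace Network

variable (N : Network)

/-- The set of boundary vertices. -/
def M : Finset (Fin N.n) := Finset.univ.biUnion N.A

/-- The number of boundary vertices. -/
def m : ℕ := N.M.card

theorem mem_M_iff {v : Fin N.n} : v ∈ N.M ↔ ∃ i, v ∈ N.A i := by
  simp [M, Finset.mem_biUnion]

/-- The root of the superport of a boundary vertex `v` (the vertex of maximal number
in the superport containing `v`); for interior `v` we set `root v = v`. -/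
noncomputable def root (v : Fin N.n) : Fin N.n :=
  if h : ∃ i, v ∈ N.A i then (N.A h.choose).max' ⟨v, h.choose_spec⟩ else v

/-- The index of the last superport. -/
def lastPort : Fin N.p := ⟨N.p - 1, Nat.sub_lt N.p_pos Nat.one_pos⟩

theorem M_nonempty : N.M.Nonempty := by
  obtain ⟨v, hv⟩ := N.A_nonempty N.lastPort
  exact ⟨v, N.mem_M_iff.mpr ⟨N.lastPort, hv⟩⟩

theorem root_mem {v : Fin N.n} (hv : v ∈ N.M) : N.root v ∈ N.M := by
  have h : ∃ i, v ∈ N.A i := N.mem_M_iff.mp hv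
  rw [root, dif_pos h]
  exact N.mem_M_iff.mpr ⟨h.choose, (N.A h.choose).max'_mem _⟩

theorem root_eq_self_of_max {v : Fin N.n} (hv : v ∈ N.M) (hmax : ∀ u ∈ N.M, u ≤ v) :
    N.root v = v := by
  have h : ∃ i, v ∈ N.A i := N.mem_M_iff.mp hv
  rw [root, dif_pos h]
  exact le_antisymm (hmax _ (N.mem_M_iff.mpr ⟨h.choose, (N.A h.choose).max'_mem _⟩))
    (Finset.le_max' _ _ h.choose_spec)

/-- Axioms (C), (I), (P), (B) for voltages `U`, currents `I`, and prescribed voltage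
differences `ΔU` (only the values of `ΔU` at non-root boundary vertices are relevant). -/
def Axioms (ΔU U : Fin N.n → ℝ) (I : Fin N.n → Fin N.n → ℝ) : Prop :=
  (∀ k l, I k l = N.c k l * (U k - U l)) ∧
  (∀ k, k ∉ N.M → ∑ l, I k l = 0) ∧
  (∀ i : Fin N.p, i ≠ N.lastPort → ∑ k ∈ N.A i, ∑ l, I k l = 0) ∧
  (∀ k, k ∈ N.M → N.root k ≠ k → U k - U (N.root k) = ΔU k)

/-- The weight of a subgraph: the product of the conductances of its edges. -/
noncomputable def weight (H : SimpleGraph (Fin N.n)) : ℝ :=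
  ∏ e ∈ (Set.toFinite H.edgeSet).toFinset, Sym2.lift ⟨N.c, N.c_symm⟩ e

/-- The number of edges of a subgraph. -/
noncomputable def edgeCount (H : SimpleGraph (Fin N.n)) : ℕ :=
  (Set.toFinite H.edgeSet).toFinset.card

/-- Two vertices lie in a common superport. -/
def samePort (u v : Fin N.n) : Prop := ∃ i, u ∈ N.A i ∧ v ∈ N.A i

/-- The `X`-equivalence: two boundary vertices not in `X` are equivalent iff they lie in
the same superport; each interior vertex and each vertex of `X` forms a singleton class.
For `X = ∅` this is the equivalence relation `∼`. -/
def xSetoid (X : Set (Fin N.n)) : Setoid (Fin N.n) where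
  r u v := u = v ∨ (u ∉ X ∧ v ∉ X ∧ N.samePort u v)
  iseqv := by
    constructor
    · intro u; exact Or.inl rfl
    · rintro u v (rfl | ⟨hu, hv, i, hui, hvi⟩)
      · exact Or.inl rfl
      · exact Or.inr ⟨hv, hu, i, hvi, hui⟩
    · rintro u v w huv hvw
      rcases huv with rfl | ⟨hu, hv, i, hui, hvi⟩
      · exact hvw
      rcases hvw with rfl | ⟨hv', hw, j, hvj, hwj⟩
      · exact Or.inr ⟨hu, hv, i, hui, hvi⟩
      · have hij : i = j := by
          by_contra hij
          exact (Finset.disjoint_left.mp (N.A_disjoint i j hij) hvi) hvj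
        exact Or.inr ⟨hu, hw, i, hui, hij ▸ hwj⟩

/-- The quotient of a graph `H` by an equivalence relation `s`: classes `a ≠ b` are
adjacent iff some representatives are adjacent in `H`. -/
def quotGraph (H : SimpleGraph (Fin N.n)) (s : Setoid (Fin N.n)) :
    SimpleGraph (Quotient s) where
  Adj a b := a ≠ b ∧ ∃ u v, H.Adj u v ∧ Quotient.mk s u = a ∧ Quotient.mk s v = b
  symm := by
    constructor
    rintro a b ⟨hab, u, v, huv, hu, hv⟩
    exact ⟨hab.symm, v, u, huv.symm, hv, hu⟩
  loopless := by
    constructor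
    rintro a ⟨hab, -⟩
    exact hab rfl

/-- A spanning forest of the network. -/
def IsSpanningForest (H : SimpleGraph (Fin N.n)) : Prop := H ≤ N.graph ∧ H.IsAcyclic

/-- A spanning forest becomes a spanning tree in the quotient by the `X`-equivalence
(in the multigraph sense): the quotient is connected and the number of edges of the
forest is one less than the number of equivalence classes.  For `X = {i}` this is
"valid relative to the vertex `i`"; for `X = ∅` this is "valid". -/
def IsValidRel (X : Set (Fin N.n)) (H : SimpleGraph (Fin N.n)) : Prop :=
  N.IsSpanningForest H ∧ (N.quotGraph H (N.xSetoid X)).Connected ∧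
    N.edgeCount H + 1 = Nat.card (Quotient (N.xSetoid X))

/-- A valid forest: a spanning forest which becomes a spanning tree in the quotient
by the equivalence `∼`. -/
def IsValidForest (H : SimpleGraph (Fin N.n)) : Prop := N.IsValidRel ∅ H

/-- The sign `sgn(H, i, j)` of a spanning forest `H` with respect to vertices `i, j`. -/
noncomputable def sgnIJ (H : SimpleGraph (Fin N.n)) (i j : Fin N.n) : ℝ :=
  if i = j ∨ ¬ (N.quotGraph H (N.xSetoid {i, j})).Reachable
      (Quotient.mk (N.xSetoid {i, j}) i) (Quotient.mk (N.xSetoid {i, j}) j)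
  then 1 else -1

/-- The type of non-root boundary vertices. -/
abbrev NonRoot := {v : Fin N.n // v ∈ N.M ∧ N.root v ≠ v}

/-- The type of boundary vertices. -/
abbrev Bdry := {v : Fin N.n // v ∈ N.M}

/-- `L` is the response matrix of the superport network: for any admissible voltages and
currents, the incoming currents at the non-root boundary vertices are obtained from the
prescribed voltage differences by multiplication by `L`. -/
def IsResponse (L : Matrix N.NonRoot N.NonRoot ℝ) : Prop :=
  ∀ (ΔU U : Fin N.n → ℝ) (I : Fin N.n → Fin N.n → ℝ), N.Axioms ΔU U I →
    ∀ x : N.NonRoot, (∑ l, I x.1 l) = ∑ y : N.NonRoot, L x y * ΔU y.1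

/-- `C` is the response matrix of the electrical network obtained by unifying all the
superports: same graph and conductances, boundary vertices `M`; axioms (C) and (I). -/
def IsElecResponse (C : Matrix N.Bdry N.Bdry ℝ) : Prop :=
  ∀ (Ub : N.Bdry → ℝ) (U : Fin N.n → ℝ) (I : Fin N.n → Fin N.n → ℝ),
    (∀ k l, I k l = N.c k l * (U k - U l)) →
    (∀ k, k ∉ N.M → ∑ l, I k l = 0) →
    (∀ v : N.Bdry, U v.1 = Ub v) →
    ∀ v : N.Bdry, (∑ l, I v.1 l) = ∑ u : N.Bdry, C v u * Ub u

/-- The sum of the weights of all valid forests. -/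
noncomputable def validForestSum : ℝ :=
  ∑ H ∈ Finset.univ.filter (fun H => N.IsValidForest H), N.weight H

end Network
end Superport

namespace Superport
namespace Network

variable (N : Network)

/-- The last (maximal) boundary vertex; it is the root of the last superport. -/
noncomputable def lastV : Fin N.n := N.M.max' N.M_nonempty

theorem nonroot_ne_lastV {v : Fin N.n} (hv : v ∈ N.M) (hr : N.root v ≠ v) :
    v ≠ N.lastV := by
  intro hEq
  apply hr
  subst hEq
  exact N.root_eq_self_of_max hv fun u hu => Finset.le_max' _ _ hu

/-- Boundary vertices other than the last one. -/
abbrev Bdry' := {v : Fin N.n // v ∈ N.M ∧ v ≠ N.lastV}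

/-- `C̃`: the response matrix of the unified electrical network with the last row and
column removed. -/
noncomputable def Ctilde (C : Matrix N.Bdry N.Bdry ℝ) : Matrix N.Bdry' N.Bdry' ℝ :=
  fun v w => C ⟨v.1, v.2.1⟩ ⟨w.1, w.2.1⟩

/-- Step 2 of the C2L algorithm: for each non-root boundary vertex `k` whose root is not
the last vertex, subtract the column `root k` from the column `k`. -/
noncomputable def stepCol (F : Matrix N.Bdry' N.Bdry' ℝ) : Matrix N.Bdry' N.Bdry' ℝ :=
  fun v w =>
    if h : N.root w.1 ≠ w.1 ∧ N.root w.1 ≠ N.lastV then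
      F v w - F v ⟨N.root w.1, N.root_mem w.2.1, h.2⟩
    else F v w

/-- Step 3 of the C2L algorithm: for each non-root boundary vertex `k` whose root is not
the last vertex, subtract the row `root k` from the row `k`. -/
noncomputable def stepRow (G : Matrix N.Bdry' N.Bdry' ℝ) : Matrix N.Bdry' N.Bdry' ℝ :=
  fun v w =>
    if h : N.root v.1 ≠ v.1 ∧ N.root v.1 ≠ N.lastV then
      G v w - G ⟨N.root v.1, N.root_mem v.2.1, h.2⟩ w
    else G v w

/-- Step 4 of the C2L algorithm: delete the rows and columns of all roots, i.e. keep only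
the non-root boundary vertices. -/
noncomputable def restrictNonRoot (H : Matrix N.Bdry' N.Bdry' ℝ) :
    Matrix N.NonRoot N.NonRoot ℝ :=
  fun v w => H ⟨v.1, v.2.1, N.nonroot_ne_lastV v.2.1 v.2.2⟩
    ⟨w.1, w.2.1, N.nonroot_ne_lastV w.2.1 w.2.2⟩

end Network


namespace Network

variable (N : Network)

/-! ### Auxiliary lemmas -/

theorem c_nonneg (k l : Fin N.n) : 0 ≤ N.c k l := by
  by_cases h : N.graph.Adj k l
  · exact (N.c_pos k l h).le
  · rw [N.c_zero k l h]

/-- The node current at a vertex. -/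
noncomputable def nodeCur (U : Fin N.n → ℝ) (k : Fin N.n) : ℝ :=
  ∑ l, N.c k l * (U k - U l)

theorem sum_sum_antisymm (f : Fin N.n → Fin N.n → ℝ) (hf : ∀ k l, f k l = - f l k) :
    ∑ k, ∑ l, f k l = 0 := by
  have h : ∑ k, ∑ l, f k l = - ∑ k, ∑ l, f k l := by
    conv_lhs => rw [Finset.sum_comm]
    rw [← Finset.sum_neg_distrib]
    refine Finset.sum_congr rfl fun x _ => ?_
    rw [← Finset.sum_neg_distrib]
    exact Finset.sum_congr rfl fun y _ => hf y x
  linarith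

theorem sum_nodeCur (U : Fin N.n → ℝ) : ∑ k, N.nodeCur U k = 0 := by
  refine N.sum_sum_antisymm _ fun k l => ?_
  rw [N.c_symm k l]; ring

theorem energy (U : Fin N.n → ℝ) :
    ∑ k, ∑ l, N.c k l * (U k - U l) ^ 2 = 2 * ∑ k, U k * N.nodeCur U k := by
  have h2 : ∑ k, ∑ l, N.c k l * (U k - U l) * U l
      = - ∑ k, ∑ l, N.c k l * (U k - U l) * U k := by
    conv_lhs => rw [Finset.sum_comm]
    rw [← Finset.sum_neg_distrib]
    refine Finset.sum_congr rfl fun x _ => ?_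
    rw [← Finset.sum_neg_distrib]
    refine Finset.sum_congr rfl fun y _ => ?_
    rw [N.c_symm y x]; ring
  have h1 : ∑ k, ∑ l, N.c k l * (U k - U l) ^ 2
      = ∑ k, ∑ l, N.c k l * (U k - U l) * U k - ∑ k, ∑ l, N.c k l * (U k - U l) * U l := by
    rw [← Finset.sum_sub_distrib]
    refine Finset.sum_congr rfl fun k _ => ?_
    rw [← Finset.sum_sub_distrib]
    exact Finset.sum_congr rfl fun l _ => by ring
  have h3 : ∑ k, U k * N.nodeCur U k = ∑ k, ∑ l, N.c k l * (U k - U l) * U k := by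
    refine Finset.sum_congr rfl fun k _ => ?_
    rw [nodeCur, Finset.mul_sum]
    exact Finset.sum_congr rfl fun l _ => by ring
  rw [h1, h2, h3]; ring

theorem eq_of_node_zero (U : Fin N.n → ℝ) (h : ∀ k, U k * N.nodeCur U k = 0)
    (u v : Fin N.n) : U u = U v := by
  have hE : ∑ k, ∑ l, N.c k l * (U k - U l) ^ 2 = 0 := by
    rw [N.energy U]
    rw [Finset.sum_congr rfl fun k _ => h k]
    simp
  have hterm : ∀ k l : Fin N.n, N.c k l * (U k - U l) ^ 2 = 0 := by
    intro k l
    have h1 := (Finset.sum_eq_zero_iff_of_nonneg (fun k _ =>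
      Finset.sum_nonneg fun l _ => mul_nonneg (N.c_nonneg k l) (sq_nonneg _))).mp hE
        k (Finset.mem_univ k)
    exact (Finset.sum_eq_zero_iff_of_nonneg (fun l _ =>
      mul_nonneg (N.c_nonneg k l) (sq_nonneg _))).mp h1 l (Finset.mem_univ l)
  have hadj : ∀ {a b : Fin N.n}, N.graph.Adj a b → U a = U b := by
    intro a b hab
    have hc := N.c_pos a b hab
    have h0 : (U a - U b) ^ 2 = 0 :=
      (mul_eq_zero.mp (hterm a b)).resolve_left (ne_of_gt hc)
    have := pow_eq_zero_iff (n := 2) (by norm_num) |>.mp h0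
    linarith
  obtain ⟨w⟩ := N.connected.preconnected u v
  induction w with
  | nil => rfl
  | cons h' _ ih => exact (hadj h').trans ih

theorem exists_dirichlet (g : Fin N.n → ℝ) :
    ∃ U : Fin N.n → ℝ, (∀ v ∈ N.M, U v = g v) ∧ ∀ k, k ∉ N.M → N.nodeCur U k = 0 := by
  classical
  let T : (Fin N.n → ℝ) →ₗ[ℝ] (Fin N.n → ℝ) :=
    { toFun := fun U k => if k ∈ N.M then U k else N.nodeCur U k
      map_add' := by
        intro U V
        funext k
        by_cases hk : k ∈ N.M
        · simp [hk]
        · simp only [if_neg hk, nodeCur, Pi.add_apply]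
          rw [← Finset.sum_add_distrib]
          exact Finset.sum_congr rfl fun l _ => by ring
      map_smul' := by
        intro a U
        funext k
        by_cases hk : k ∈ N.M
        · simp [hk]
        · simp only [if_neg hk, nodeCur, Pi.smul_apply, smul_eq_mul, RingHom.id_apply]
          rw [Finset.mul_sum]
          exact Finset.sum_congr rfl fun l _ => by ring }
  have h0 : ∀ U : Fin N.n → ℝ, T U = 0 → U = 0 := by
    intro U hU
    have hM : ∀ v ∈ N.M, U v = 0 := by
      intro v hv
      have := congrFun hU v
      simpa [T, if_pos hv] using this
    have hI : ∀ k, k ∉ N.M → N.nodeCur U k = 0 := by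
      intro k hk
      have := congrFun hU k
      simpa [T, if_neg hk] using this
    have hcst := N.eq_of_node_zero U (fun k => by
      by_cases hk : k ∈ N.M
      · rw [hM k hk]; ring
      · rw [hI k hk]; ring)
    funext k
    rw [Pi.zero_apply, hcst k N.lastV, hM N.lastV (N.M.max'_mem N.M_nonempty)]
  have hinj : Function.Injective T := by
    intro a b hab
    have := h0 (a - b) (by rw [map_sub, sub_eq_zero]; exact hab)
    rwa [sub_eq_zero] at this
  obtain ⟨U, hU⟩ := LinearMap.injective_iff_surjective.mp hinj
    (fun k => if k ∈ N.M then g k else 0)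
  refine ⟨U, fun v hv => ?_, fun k hk => ?_⟩
  · have := congrFun hU v
    simpa [T, if_pos hv] using this
  · have := congrFun hU k
    simpa [T, if_neg hk] using this

/-! ### Root and port lemmas -/

theorem port_unique {v : Fin N.n} {i j : Fin N.p} (hi : v ∈ N.A i) (hj : v ∈ N.A j) :
    i = j := by
  by_contra hij
  exact (Finset.disjoint_left.mp (N.A_disjoint i j hij) hi) hj

theorem root_char {v : Fin N.n} {i : Fin N.p} (h : v ∈ N.A i) :
    N.root v ∈ N.A i ∧ ∀ u ∈ N.A i, u ≤ N.root v := by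
  have h' : ∃ j, v ∈ N.A j := ⟨i, h⟩
  have hchoose : h'.choose = i := N.port_unique h'.choose_spec h
  have hset : N.A h'.choose = N.A i := by rw [hchoose]
  rw [root, dif_pos h']
  constructor
  · rw [← hset]; exact Finset.max'_mem _ _
  · intro u hu
    exact Finset.le_max' _ _ (by rw [hset]; exact hu)

theorem root_mem_port {v : Fin N.n} {i : Fin N.p} (h : v ∈ N.A i) : N.root v ∈ N.A i :=
  (N.root_char h).1

theorem root_eq_root {v w : Fin N.n} {i : Fin N.p} (hv : v ∈ N.A i) (hw : w ∈ N.A i) :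
    N.root v = N.root w :=
  le_antisymm ((N.root_char hw).2 _ (N.root_mem_port hv))
    ((N.root_char hv).2 _ (N.root_mem_port hw))

theorem root_idem {v : Fin N.n} (hv : v ∈ N.M) : N.root (N.root v) = N.root v := by
  obtain ⟨i, hi⟩ := N.mem_M_iff.mp hv
  exact N.root_eq_root (N.root_mem_port hi) hi

theorem port_subset_M (i : Fin N.p) : N.A i ⊆ N.M := fun v hv =>
  N.mem_M_iff.mpr ⟨i, hv⟩

theorem lastV_mem : N.lastV ∈ N.M := N.M.max'_mem N.M_nonempty

theorem lastV_mem_lastPort : N.lastV ∈ N.A N.lastPort := by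
  obtain ⟨i, hi⟩ := N.mem_M_iff.mp N.lastV_mem
  rcases eq_or_ne i N.lastPort with rfl | hne
  · exact hi
  · exfalso
    obtain ⟨v, hv⟩ := N.A_nonempty N.lastPort
    have hilt : i < N.lastPort := by
      refine lt_of_le_of_ne ?_ hne
      have : (i : ℕ) ≤ N.p - 1 := Nat.le_sub_one_of_lt i.2
      exact this
    have hlt := N.A_ordered i N.lastPort N.lastV v hilt hi hv
    have hle := Finset.le_max' N.M v (N.port_subset_M _ hv)
    exact absurd hle (not_le.mpr hlt)

theorem root_lastV : N.root N.lastV = N.lastV :=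
  N.root_eq_self_of_max N.lastV_mem fun u hu => Finset.le_max' _ _ hu

theorem ne_lastV_of_mem_port {k : Fin N.n} {i : Fin N.p} (hi : i ≠ N.lastPort)
    (hk : k ∈ N.A i) : k ≠ N.lastV := by
  intro h
  subst h
  exact hi (N.port_unique hk N.lastV_mem_lastPort)

theorem root_mem_port_iff {k' : Fin N.n} (hk' : k' ∈ N.M) (i : Fin N.p) :
    N.root k' ∈ N.A i ↔ k' ∈ N.A i := by
  obtain ⟨j, hj⟩ := N.mem_M_iff.mp hk'
  constructor
  · intro h
    have : j = i := N.port_unique (N.root_mem_port hj) h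
    exact this ▸ hj
  · exact fun h => N.root_mem_port h

/-! ### Reindexing lemmas -/

theorem sum_bdry (f : N.Bdry → ℝ) (g : Fin N.n → ℝ) (hfg : ∀ u : N.Bdry, f u = g u.1) :
    ∑ u : N.Bdry, f u = ∑ w ∈ N.M, g w := by
  rw [Finset.sum_subtype N.M (fun _ => Iff.rfl) g]
  exact Finset.sum_congr rfl fun u _ => hfg u

theorem sum_bdry' (f : N.Bdry' → ℝ) (g : Fin N.n → ℝ) (hfg : ∀ u : N.Bdry', f u = g u.1) :
    ∑ u : N.Bdry', f u = ∑ w ∈ N.M.erase N.lastV, g w := by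
  rw [Finset.sum_subtype (p := fun v => v ∈ N.M ∧ v ≠ N.lastV) (N.M.erase N.lastV)
    (fun x => by rw [Finset.mem_erase]; exact and_comm) g]
  exact Finset.sum_congr rfl fun u _ => hfg u

theorem sum_nonroot (f : N.NonRoot → ℝ) (g : Fin N.n → ℝ)
    (hfg : ∀ u : N.NonRoot, f u = g u.1) :
    ∑ u : N.NonRoot, f u = ∑ w ∈ N.M.filter (fun v => N.root v ≠ v), g w := by
  rw [Finset.sum_subtype (p := fun v => v ∈ N.M ∧ N.root v ≠ v)
    (N.M.filter (fun v => N.root v ≠ v)) (fun x => by rw [Finset.mem_filter]) g]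
  exact Finset.sum_congr rfl fun u _ => hfg u

theorem bdry_sum_eq (D : Matrix N.Bdry N.Bdry ℝ) (X : Fin N.n → ℝ) (hX : X N.lastV = 0)
    (v : N.Bdry) :
    ∑ u : N.Bdry, D v u * X u.1 = ∑ u : N.Bdry', D v ⟨u.1, u.2.1⟩ * X u.1 := by
  have h1 : ∑ u : N.Bdry, D v u * X u.1
      = ∑ w ∈ N.M, (if hw : w ∈ N.M then D v ⟨w, hw⟩ else 0) * X w :=
    N.sum_bdry _ _ fun u => by rw [dif_pos u.2]
  have h2 : ∑ u : N.Bdry', D v ⟨u.1, u.2.1⟩ * X u.1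
      = ∑ w ∈ N.M.erase N.lastV, (if hw : w ∈ N.M then D v ⟨w, hw⟩ else 0) * X w :=
    N.sum_bdry' _ _ fun u => by rw [dif_pos u.2.1]
  rw [h1, h2]
  exact (Finset.sum_erase _ (by rw [hX, mul_zero])).symm

end Network

namespace Network

variable (N : Network)

theorem ctilde_isUnit (C : Matrix N.Bdry N.Bdry ℝ) (hC : N.IsElecResponse C) :
    IsUnit (N.Ctilde C) := by
  rw [← Matrix.mulVec_injective_iff_isUnit]
  have hker : ∀ x : N.Bdry' → ℝ, (N.Ctilde C).mulVec x = 0 → x = 0 := by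
    intro x hx
    set X : Fin N.n → ℝ := fun w => if h : w ∈ N.M ∧ w ≠ N.lastV then x ⟨w, h⟩ else 0
      with hXdef
    have hXval : ∀ u : N.Bdry', X u.1 = x u := fun u => dif_pos u.2
    have hX0 : X N.lastV = 0 := dif_neg (by simp)
    obtain ⟨U, hUb, hUi⟩ := N.exists_dirichlet X
    have hcur : ∀ v : N.Bdry, N.nodeCur U v.1 = ∑ u : N.Bdry, C v u * X u.1 := by
      intro v
      exact hC (fun u => X u.1) U (fun k l => N.c k l * (U k - U l)) (fun _ _ => rfl)
        (fun k hk => hUi k hk) (fun u => hUb u.1 u.2) v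
    have hbd' : ∀ v : N.Bdry', N.nodeCur U v.1 = 0 := by
      intro v
      have h1 := hcur ⟨v.1, v.2.1⟩
      rw [N.bdry_sum_eq C X hX0 ⟨v.1, v.2.1⟩] at h1
      have h2 : ∑ u : N.Bdry', C ⟨v.1, v.2.1⟩ ⟨u.1, u.2.1⟩ * X u.1
          = (N.Ctilde C).mulVec x v := by
        rw [show (N.Ctilde C).mulVec x v = ∑ u : N.Bdry', N.Ctilde C v u * x u by
          simp [Matrix.mulVec, dotProduct]]
        exact Finset.sum_congr rfl fun u _ => by rw [hXval u]; rfl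
      rw [h1, h2, hx, Pi.zero_apply]
    have hall : ∀ k, k ≠ N.lastV → N.nodeCur U k = 0 := by
      intro k hk
      by_cases hkM : k ∈ N.M
      · exact hbd' ⟨k, hkM, hk⟩
      · exact hUi k hkM
    have hlast : N.nodeCur U N.lastV = 0 := by
      calc N.nodeCur U N.lastV = ∑ k, N.nodeCur U k :=
            (Finset.sum_eq_single_of_mem N.lastV (Finset.mem_univ _)
              fun b _ hb => hall b hb).symm
        _ = 0 := N.sum_nodeCur U
    have hnode : ∀ k, N.nodeCur U k = 0 := by
      intro k
      rcases eq_or_ne k N.lastV with rfl | hk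
      · exact hlast
      · exact hall k hk
    have hconst := N.eq_of_node_zero U (fun k => by rw [hnode k, mul_zero])
    funext u
    rw [Pi.zero_apply, ← hXval u, ← hUb u.1 u.2.1, hconst u.1 N.lastV,
      hUb N.lastV N.lastV_mem, hX0]
  intro a b hab
  have := hker (a - b) (by rw [Matrix.mulVec_sub, sub_eq_zero]; exact hab)
  rwa [sub_eq_zero] at this

/-! ### The vector of prescribed currents and the key linear-algebra computation -/

/-- The prescribed incoming currents, extended by `0` to all vertices. -/
noncomputable def JXf (J : N.NonRoot → ℝ) : Fin N.n → ℝ :=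
  fun v => if h : v ∈ N.M ∧ N.root v ≠ v then J ⟨v, h⟩ else 0

/-- The incoming currents at all boundary vertices except the last one: at a root the
current is minus the sum of the currents of its superport. -/
noncomputable def Ibf (J : N.NonRoot → ℝ) : N.Bdry' → ℝ :=
  fun w => N.JXf J w.1 - ∑ k ∈ N.M.filter (fun k => N.root k = w.1), N.JXf J k

/-- A row of a `Bdry'`-matrix, extended by `0` to all vertices. -/
noncomputable def Ff (F : Matrix N.Bdry' N.Bdry' ℝ) (a : N.Bdry') : Fin N.n → ℝ :=
  fun w => if h : w ∈ N.M ∧ w ≠ N.lastV then F a ⟨w, h⟩ else 0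

theorem JXf_nonroot (J : N.NonRoot → ℝ) (z : N.NonRoot) : N.JXf J z.1 = J z :=
  dif_pos z.2

theorem JXf_root (J : N.NonRoot → ℝ) {v : Fin N.n} (hv : N.root v = v) : N.JXf J v = 0 :=
  dif_neg fun h => h.2 hv

theorem fiber_nonroot_empty {v : Fin N.n} (hv : N.root v ≠ v) :
    N.M.filter (fun k => N.root k = v) = ∅ := by
  rw [Finset.filter_eq_empty_iff]
  intro k hk hkv
  exact hv (by rw [← hkv, N.root_idem hk])

theorem Ibf_nonroot (J : N.NonRoot → ℝ) (w : N.Bdry') (hw : N.root w.1 ≠ w.1) :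
    N.Ibf J w = N.JXf J w.1 := by
  rw [Ibf, N.fiber_nonroot_empty hw, Finset.sum_empty, sub_zero]

theorem Ff_lastV (F : Matrix N.Bdry' N.Bdry' ℝ) (a : N.Bdry') : N.Ff F a N.lastV = 0 :=
  dif_neg (by simp)

theorem Ff_bdry (F : Matrix N.Bdry' N.Bdry' ℝ) (a u : N.Bdry') : N.Ff F a u.1 = F a u :=
  dif_pos u.2

theorem sum_M_JX (J : N.NonRoot → ℝ) (φ : Fin N.n → ℝ) :
    ∑ k ∈ N.M, φ k * N.JXf J k = ∑ z : N.NonRoot, φ z.1 * J z := by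
  rw [← Finset.sum_filter_of_ne (p := fun v => N.root v ≠ v) (fun k _ hne => by
    intro hroot
    exact hne (by rw [N.JXf_root J hroot, mul_zero]))]
  exact (N.sum_nonroot (fun z => φ z.1 * J z) (fun k => φ k * N.JXf J k)
    (fun z => by show φ z.1 * J z = φ z.1 * N.JXf J z.1; rw [N.JXf_nonroot J z])).symm

theorem KL3 (F : Matrix N.Bdry' N.Bdry' ℝ) (J : N.NonRoot → ℝ) (a : N.Bdry') :
    F.mulVec (N.Ibf J) a
      = ∑ k ∈ N.M, (N.Ff F a k - N.Ff F a (N.root k)) * N.JXf J k := by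
  have e1 : F.mulVec (N.Ibf J) a
      = ∑ w ∈ N.M.erase N.lastV, N.Ff F a w * (N.JXf J w
          - ∑ k ∈ N.M.filter (fun k => N.root k = w), N.JXf J k) := by
    rw [show F.mulVec (N.Ibf J) a = ∑ w : N.Bdry', F a w * N.Ibf J w by
      simp [Matrix.mulVec, dotProduct]]
    exact N.sum_bdry' _ _ fun u => by rw [N.Ff_bdry F a u]; rfl
  rw [e1, Finset.sum_erase _ (by rw [N.Ff_lastV, zero_mul])]
  have e3 : ∑ w ∈ N.M, N.Ff F a w * (N.JXf J w
        - ∑ k ∈ N.M.filter (fun k => N.root k = w), N.JXf J k)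
      = ∑ w ∈ N.M, N.Ff F a w * N.JXf J w
        - ∑ w ∈ N.M, ∑ k ∈ N.M.filter (fun k => N.root k = w), N.Ff F a w * N.JXf J k := by
    rw [← Finset.sum_sub_distrib]
    refine Finset.sum_congr rfl fun w _ => ?_
    rw [mul_sub, Finset.mul_sum]
  have e4 : ∑ w ∈ N.M, ∑ k ∈ N.M.filter (fun k => N.root k = w), N.Ff F a w * N.JXf J k
      = ∑ k ∈ N.M, N.Ff F a (N.root k) * N.JXf J k := by
    have e4a : ∀ w ∈ N.M, ∑ k ∈ N.M.filter (fun k => N.root k = w), N.Ff F a w * N.JXf J k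
        = ∑ k ∈ N.M.filter (fun k => N.root k = w), N.Ff F a (N.root k) * N.JXf J k :=
      fun w _ => Finset.sum_congr rfl fun k hk => by rw [(Finset.mem_filter.mp hk).2]
    calc ∑ w ∈ N.M, ∑ k ∈ N.M.filter (fun k => N.root k = w), N.Ff F a w * N.JXf J k
        = ∑ w ∈ N.M, ∑ k ∈ N.M.filter (fun k => N.root k = w),
            N.Ff F a (N.root k) * N.JXf J k := Finset.sum_congr rfl e4a
      _ = ∑ k ∈ N.M.filter (fun k => N.root k ∈ N.M),
            N.Ff F a (N.root k) * N.JXf J k :=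
          Finset.sum_fiberwise_eq_sum_filter N.M N.M N.root
            (fun k => N.Ff F a (N.root k) * N.JXf J k)
      _ = ∑ k ∈ N.M, N.Ff F a (N.root k) * N.JXf J k := by
          rw [Finset.filter_true_of_mem (fun k hk => N.root_mem hk)]
  rw [e3, e4, ← Finset.sum_sub_distrib]
  exact Finset.sum_congr rfl fun k _ => by ring

theorem KL (F : Matrix N.Bdry' N.Bdry' ℝ) (J : N.NonRoot → ℝ) (y : N.NonRoot) :
    F.mulVec (N.Ibf J) ⟨y.1, y.2.1, N.nonroot_ne_lastV y.2.1 y.2.2⟩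
      - (if h : N.root y.1 ≠ N.lastV then
          F.mulVec (N.Ibf J) ⟨N.root y.1, N.root_mem y.2.1, h⟩ else 0)
      = (N.restrictNonRoot (N.stepRow (N.stepCol F))).mulVec J y := by
  set yb : N.Bdry' := ⟨y.1, y.2.1, N.nonroot_ne_lastV y.2.1 y.2.2⟩ with hyb
  have hmv : (N.restrictNonRoot (N.stepRow (N.stepCol F))).mulVec J y
      = ∑ z : N.NonRoot, N.stepRow (N.stepCol F) yb
          ⟨z.1, z.2.1, N.nonroot_ne_lastV z.2.1 z.2.2⟩ * J z := by
    simp [Matrix.mulVec, dotProduct, restrictNonRoot]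
    rfl
  by_cases hrl : N.root y.1 = N.lastV
  · rw [dif_neg (not_not_intro hrl), sub_zero, N.KL3 F J yb, N.sum_M_JX J, hmv]
    refine Finset.sum_congr rfl fun z _ => ?_
    set zb : N.Bdry' := ⟨z.1, z.2.1, N.nonroot_ne_lastV z.2.1 z.2.2⟩ with hzb
    have hrow : N.stepRow (N.stepCol F) yb zb = N.stepCol F yb zb :=
      dif_neg (fun h => h.2 hrl)
    rw [hrow]
    by_cases hzl : N.root z.1 = N.lastV
    · rw [show N.stepCol F yb zb = F yb zb from dif_neg (fun h => h.2 hzl),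
        show N.Ff F yb z.1 = F yb zb from dif_pos ⟨z.2.1, N.nonroot_ne_lastV z.2.1 z.2.2⟩,
        show N.Ff F yb (N.root z.1) = 0 from dif_neg (fun h => h.2 hzl), sub_zero]
    · rw [show N.stepCol F yb zb = F yb zb - F yb ⟨N.root z.1, N.root_mem z.2.1, hzl⟩ from
        dif_pos ⟨z.2.2, hzl⟩,
        show N.Ff F yb z.1 = F yb zb from dif_pos ⟨z.2.1, N.nonroot_ne_lastV z.2.1 z.2.2⟩,
        show N.Ff F yb (N.root z.1) = F yb ⟨N.root z.1, N.root_mem z.2.1, hzl⟩ from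
          dif_pos ⟨N.root_mem z.2.1, hzl⟩]
  · rw [dif_pos hrl]
    set rr : N.Bdry' := ⟨N.root y.1, N.root_mem y.2.1, hrl⟩ with hrr
    rw [N.KL3 F J yb, N.KL3 F J rr, N.sum_M_JX J, N.sum_M_JX J, hmv,
      ← Finset.sum_sub_distrib]
    refine Finset.sum_congr rfl fun z _ => ?_
    set zb : N.Bdry' := ⟨z.1, z.2.1, N.nonroot_ne_lastV z.2.1 z.2.2⟩ with hzb
    have hrow : N.stepRow (N.stepCol F) yb zb = N.stepCol F yb zb - N.stepCol F rr zb :=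
      dif_pos ⟨y.2.2, hrl⟩
    rw [hrow]
    by_cases hzl : N.root z.1 = N.lastV
    · rw [show N.stepCol F yb zb = F yb zb from dif_neg (fun h => h.2 hzl),
        show N.stepCol F rr zb = F rr zb from dif_neg (fun h => h.2 hzl),
        show N.Ff F yb z.1 = F yb zb from dif_pos ⟨z.2.1, N.nonroot_ne_lastV z.2.1 z.2.2⟩,
        show N.Ff F rr z.1 = F rr zb from dif_pos ⟨z.2.1, N.nonroot_ne_lastV z.2.1 z.2.2⟩,
        show N.Ff F yb (N.root z.1) = 0 from dif_neg (fun h => h.2 hzl),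
        show N.Ff F rr (N.root z.1) = 0 from dif_neg (fun h => h.2 hzl)]
      ring
    · rw [show N.stepCol F yb zb = F yb zb - F yb ⟨N.root z.1, N.root_mem z.2.1, hzl⟩ from
        dif_pos ⟨z.2.2, hzl⟩,
        show N.stepCol F rr zb = F rr zb - F rr ⟨N.root z.1, N.root_mem z.2.1, hzl⟩ from
          dif_pos ⟨z.2.2, hzl⟩,
        show N.Ff F yb z.1 = F yb zb from dif_pos ⟨z.2.1, N.nonroot_ne_lastV z.2.1 z.2.2⟩,
        show N.Ff F rr z.1 = F rr zb from dif_pos ⟨z.2.1, N.nonroot_ne_lastV z.2.1 z.2.2⟩,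
        show N.Ff F yb (N.root z.1) = F yb ⟨N.root z.1, N.root_mem z.2.1, hzl⟩ from
          dif_pos ⟨N.root_mem z.2.1, hzl⟩,
        show N.Ff F rr (N.root z.1) = F rr ⟨N.root z.1, N.root_mem z.2.1, hzl⟩ from
          dif_pos ⟨N.root_mem z.2.1, hzl⟩]
      ring

end Network

/-- **The C2L algorithm** (Theorem 5.2): the response matrix `L` of a superport network is
obtained from the response matrix `C` of the electrical network obtained by unifying all
the superports by the following steps: remove the last row and column and invert; subtract
the column `root k` from the column `k` for each non-root `k` with `root k ≠` the last
vertex; likewise for rows; delete the rows and columns of all roots distinct from the last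
vertex; invert. -/
theorem response_from_unified_response (N : Network) (hmp : N.p < N.m)
    (L : Matrix N.NonRoot N.NonRoot ℝ) (hL : N.IsResponse L)
    (C : Matrix N.Bdry N.Bdry ℝ) (hC : N.IsElecResponse C) :
    IsUnit (N.Ctilde C) ∧
    IsUnit (N.restrictNonRoot (N.stepRow (N.stepCol (N.Ctilde C)⁻¹))) ∧
    L = (N.restrictNonRoot (N.stepRow (N.stepCol (N.Ctilde C)⁻¹)))⁻¹ := by
  have hCt : IsUnit (N.Ctilde C) := N.ctilde_isUnit C hC
  have hdet : IsUnit (N.Ctilde C).det := (Matrix.isUnit_iff_isUnit_det _).mp hCt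
  have hCF : N.Ctilde C * (N.Ctilde C)⁻¹ = 1 := Matrix.mul_nonsing_inv _ hdet
  set F : Matrix N.Bdry' N.Bdry' ℝ := (N.Ctilde C)⁻¹ with hFdef
  set H' : Matrix N.NonRoot N.NonRoot ℝ := N.restrictNonRoot (N.stepRow (N.stepCol F))
    with hH'def
  have key : ∀ J : N.NonRoot → ℝ, (L * H').mulVec J = J := by
    intro J
    set X : Fin N.n → ℝ := fun v =>
      if h : v ∈ N.M ∧ v ≠ N.lastV then F.mulVec (N.Ibf J) ⟨v, h⟩ else 0 with hXdef
    have hXval : ∀ u : N.Bdry', X u.1 = F.mulVec (N.Ibf J) u := fun u => dif_pos u.2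
    have hX0 : X N.lastV = 0 := dif_neg (by simp)
    obtain ⟨U, hUb, hUi⟩ := N.exists_dirichlet X
    have hcur : ∀ v : N.Bdry, N.nodeCur U v.1 = ∑ u : N.Bdry, C v u * X u.1 :=
      fun v => hC (fun u => X u.1) U (fun k l => N.c k l * (U k - U l)) (fun _ _ => rfl)
        (fun k hk => hUi k hk) (fun u => hUb u.1 u.2) v
    have hbd : ∀ v : N.Bdry', N.nodeCur U v.1 = N.Ibf J v := by
      intro v
      have h1 := hcur ⟨v.1, v.2.1⟩
      rw [N.bdry_sum_eq C X hX0 ⟨v.1, v.2.1⟩] at h1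
      have h2 : ∑ u : N.Bdry', C ⟨v.1, v.2.1⟩ ⟨u.1, u.2.1⟩ * X u.1
          = (N.Ctilde C).mulVec (F.mulVec (N.Ibf J)) v := by
        rw [show (N.Ctilde C).mulVec (F.mulVec (N.Ibf J)) v
            = ∑ u : N.Bdry', N.Ctilde C v u * F.mulVec (N.Ibf J) u by
          simp [Matrix.mulVec, dotProduct]]
        exact Finset.sum_congr rfl fun u _ => by rw [hXval u]; rfl
      rw [h1, h2, Matrix.mulVec_mulVec, hCF, Matrix.one_mulVec]
    have hP : ∀ i : Fin N.p, i ≠ N.lastPort →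
        ∑ k ∈ N.A i, ∑ l, N.c k l * (U k - U l) = 0 := by
      intro i hi
      have hmem : ∀ k ∈ N.A i, (∑ l, N.c k l * (U k - U l))
          = N.JXf J k - ∑ k' ∈ N.M.filter (fun k' => N.root k' = k), N.JXf J k' :=
        fun k hk => hbd ⟨k, N.port_subset_M i hk, N.ne_lastV_of_mem_port hi hk⟩
      rw [Finset.sum_congr rfl hmem, Finset.sum_sub_distrib, sub_eq_zero,
        Finset.sum_fiberwise_eq_sum_filter N.M (N.A i) N.root (N.JXf J)]
      have hset : N.M.filter (fun k' => N.root k' ∈ N.A i) = N.A i := by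
        ext k'
        simp only [Finset.mem_filter]
        constructor
        · rintro ⟨hk', h⟩
          exact (N.root_mem_port_iff hk' i).mp h
        · intro h
          exact ⟨N.port_subset_M i h, (N.root_mem_port_iff (N.port_subset_M i h) i).mpr h⟩
      rw [hset]
    have hAx : N.Axioms (fun k => U k - U (N.root k)) U (fun k l => N.c k l * (U k - U l)) :=
      ⟨fun _ _ => rfl, fun k hk => hUi k hk, hP, fun _ _ _ => rfl⟩
    have hLx := hL _ U _ hAx
    have hKL : ∀ y : N.NonRoot, U y.1 - U (N.root y.1) = H'.mulVec J y := by
      intro y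
      have h1 : U y.1 = F.mulVec (N.Ibf J) ⟨y.1, y.2.1, N.nonroot_ne_lastV y.2.1 y.2.2⟩ := by
        rw [hUb y.1 y.2.1]
        exact hXval ⟨y.1, y.2.1, N.nonroot_ne_lastV y.2.1 y.2.2⟩
      have h2 : U (N.root y.1) = if h : N.root y.1 ≠ N.lastV then
          F.mulVec (N.Ibf J) ⟨N.root y.1, N.root_mem y.2.1, h⟩ else 0 := by
        rw [hUb (N.root y.1) (N.root_mem y.2.1)]
        by_cases hrl : N.root y.1 = N.lastV
        · rw [dif_neg (not_not_intro hrl)]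
          exact dif_neg (fun h => h.2 hrl)
        · rw [dif_pos hrl]
          exact dif_pos ⟨N.root_mem y.2.1, hrl⟩
      rw [h1, h2, hH'def]
      exact N.KL F J y
    have hJcur : ∀ x : N.NonRoot, (∑ l, N.c x.1 l * (U x.1 - U l)) = J x := by
      intro x
      have h1 : N.nodeCur U x.1 = N.Ibf J ⟨x.1, x.2.1, N.nonroot_ne_lastV x.2.1 x.2.2⟩ :=
        hbd ⟨x.1, x.2.1, N.nonroot_ne_lastV x.2.1 x.2.2⟩
      rw [N.Ibf_nonroot J _ x.2.2] at h1
      rw [show (∑ l, N.c x.1 l * (U x.1 - U l)) = N.nodeCur U x.1 from rfl, h1,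
        N.JXf_nonroot J x]
    funext x
    calc (L * H').mulVec J x = ∑ y : N.NonRoot, L x y * (H'.mulVec J) y := by
          rw [← Matrix.mulVec_mulVec]
          simp [Matrix.mulVec, dotProduct]
      _ = ∑ y : N.NonRoot, L x y * (U y.1 - U (N.root y.1)) :=
          Finset.sum_congr rfl fun y _ => by rw [hKL y]
      _ = ∑ l, N.c x.1 l * (U x.1 - U l) := (hLx x).symm
      _ = J x := hJcur x
  have hLH : L * H' = 1 := by
    apply Matrix.toLin'.injective
    apply LinearMap.ext
    intro J
    rw [Matrix.toLin'_apply, Matrix.toLin'_apply, key J, Matrix.one_mulVec]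
  have hH'unit : IsUnit H' := (Matrix.isUnit_iff_isUnit_det _).mpr (Matrix.isUnit_det_of_left_inverse hLH)
  exact ⟨hCt, hH'unit, (Matrix.inv_eq_left_inv hLH).symm⟩

end Superport
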